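/- For non-negative integers x, y, z with 2x + y + z = g, the matrix (−1)·(W(x,y,z) ⊕ ᵗW(x,y,z)) is conjugate in Sp(2g, ℤ) to W(x,z,y) ⊕ ᵗW(x,z,y). -/

import Mathlib

open Matrix

/-- `W(x,y,z)` as a `g × g` integer matrix: block diagonal sum of `x` copies of
`J₁ = [[1,0],[1,-1]]`, followed by `-I_y` and `I_z` (with `z = g - 2x - y`). -/
def Wmat (g x y : ℕ) : Matrix (Fin g) (Fin g) ℤ :=
  Matrix.of fun i j =>
    if (i : ℕ) < 2 * x then
      (if (i : ℕ) = (j : ℕ) then (if (i : ℕ) % 2 = 0 then 1 else -1)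
       else if (i : ℕ) = (j : ℕ) + 1 ∧ (i : ℕ) % 2 = 1 then 1 else 0)
    else if (i : ℕ) = (j : ℕ) then (if (i : ℕ) < 2 * x + y then -1 else 1) else 0

/-- The standard symplectic form matrix `J = [[0, I_g],[-I_g, 0]]`. -/
def Jstd (g : ℕ) : Matrix (Fin g ⊕ Fin g) (Fin g ⊕ Fin g) ℤ :=
  Matrix.fromBlocks 0 1 (-1) 0

def Pmat (g x y z : ℕ) : Matrix (Fin g) (Fin g) ℤ :=
  Matrix.of fun i j =>
    if (i : ℕ) < 2 * x then
      (if (i : ℕ) = (j : ℕ) then (if (i : ℕ) % 2 = 0 then 1 else -1)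
       else if (i : ℕ) % 2 = 0 ∧ (j : ℕ) = (i : ℕ) + 1 then -2
       else if (i : ℕ) % 2 = 1 ∧ (i : ℕ) = (j : ℕ) + 1 then 1 else 0)
    else if (i : ℕ) < 2 * x + y then (if (j : ℕ) = (i : ℕ) + z then 1 else 0)
    else (if (i : ℕ) = (j : ℕ) + y then 1 else 0)
def Pinvmat (g x y z : ℕ) : Matrix (Fin g) (Fin g) ℤ :=
  Matrix.of fun i j =>
    if (i : ℕ) < 2 * x then
      (if (i : ℕ) = (j : ℕ) then (if (i : ℕ) % 2 = 0 then -1 else 1)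
       else if (i : ℕ) % 2 = 0 ∧ (j : ℕ) = (i : ℕ) + 1 then 2
       else if (i : ℕ) % 2 = 1 ∧ (i : ℕ) = (j : ℕ) + 1 then -1 else 0)
    else if (i : ℕ) < 2 * x + z then (if (j : ℕ) = (i : ℕ) + y then 1 else 0)
    else (if (i : ℕ) = (j : ℕ) + z then 1 else 0)
lemma sum_one' {g : ℕ} (f : Fin g → ℤ) (a : Fin g)
    (h : ∀ k, k ≠ a → f k = 0) : ∑ k, f k = f a :=
  Finset.sum_eq_single_of_mem a (Finset.mem_univ a) (fun k _ hk => h k hk)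
lemma sum_two' {g : ℕ} (f : Fin g → ℤ) (a b : Fin g) (hab : a ≠ b)
    (h : ∀ k, k ≠ a → k ≠ b → f k = 0) : ∑ k, f k = f a + f b := by
  rw [← Finset.sum_pair hab]
  refine (Finset.sum_subset (Finset.subset_univ _) ?_).symm
  intro k _ hk
  simp only [Finset.mem_insert, Finset.mem_singleton, not_or] at hk
  exact h k hk.1 hk.2

set_option maxHeartbeats 1000000 in
lemma mulPPinv {g x y z : ℕ} (h : 2 * x + y + z = g) :
    Pmat g x y z * Pinvmat g x y z = 1 := by
  ext i j
  rw [mul_apply, Matrix.one_apply]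
  by_cases h1 : (i : ℕ) < 2 * x
  · by_cases h2 : (i : ℕ) % 2 = 0
    · have hi1 : (i : ℕ) + 1 < g := by omega
      rw [sum_two' (fun k => Pmat g x y z i k * Pinvmat g x y z k j) i ⟨(i : ℕ) + 1, hi1⟩
        (by simp [Fin.ext_iff]) ?_]
      · simp only [Pmat, Pinvmat, of_apply, Fin.ext_iff, Fin.val_mk, and_true, true_and, and_false, false_and]
        split_ifs <;> first | omega | norm_num
      · intro k hk1 hk2
        have hk1' := Fin.val_ne_of_ne hk1
        have hk2' := Fin.val_ne_of_ne hk2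
        simp only [Fin.val_mk] at hk2'
        have hz : Pmat g x y z i k = 0 := by
          simp only [Pmat, of_apply]; split_ifs <;> omega
        simp only [hz, zero_mul]
    · have hi0 : (i : ℕ) - 1 < g := by omega
      rw [sum_two' (fun k => Pmat g x y z i k * Pinvmat g x y z k j) ⟨(i : ℕ) - 1, hi0⟩ i
        (by simp [Fin.ext_iff]; omega) ?_]
      · simp only [Pmat, Pinvmat, of_apply, Fin.ext_iff, Fin.val_mk, and_true, true_and, and_false, false_and]
        split_ifs <;> first | omega | norm_num
      · intro k hk1 hk2
        have hk1' := Fin.val_ne_of_ne hk1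
        have hk2' := Fin.val_ne_of_ne hk2
        simp only [Fin.val_mk] at hk1'
        have hz : Pmat g x y z i k = 0 := by
          simp only [Pmat, of_apply]; split_ifs <;> omega
        simp only [hz, zero_mul]
  · by_cases h2 : (i : ℕ) < 2 * x + y
    · have hi1 : (i : ℕ) + z < g := by omega
      rw [sum_one' (fun k => Pmat g x y z i k * Pinvmat g x y z k j) ⟨(i : ℕ) + z, hi1⟩ ?_]
      · simp only [Pmat, Pinvmat, of_apply, Fin.ext_iff, Fin.val_mk, and_true, true_and, and_false, false_and]
        split_ifs <;> first | omega | norm_num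
      · intro k hk1
        have hk1' := Fin.val_ne_of_ne hk1
        simp only [Fin.val_mk] at hk1'
        have hz : Pmat g x y z i k = 0 := by
          simp only [Pmat, of_apply]; split_ifs <;> omega
        simp only [hz, zero_mul]
    · have hig := i.isLt
      have hi1 : (i : ℕ) - y < g := by omega
      rw [sum_one' (fun k => Pmat g x y z i k * Pinvmat g x y z k j) ⟨(i : ℕ) - y, hi1⟩ ?_]
      · simp only [Pmat, Pinvmat, of_apply, Fin.ext_iff, Fin.val_mk, and_true, true_and, and_false, false_and]
        split_ifs <;> first | omega | norm_num
      · intro k hk1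
        have hk1' := Fin.val_ne_of_ne hk1
        simp only [Fin.val_mk] at hk1'
        have hz : Pmat g x y z i k = 0 := by
          simp only [Pmat, of_apply]; split_ifs <;> omega
        simp only [hz, zero_mul]

set_option maxHeartbeats 800000 in
lemma keyPW {g x y z : ℕ} (h : 2 * x + y + z = g) :
    (-(Wmat g x y)) * Pmat g x y z = Pmat g x y z * Wmat g x z := by
  ext i j
  rw [mul_apply, mul_apply]
  simp only [neg_apply]
  have hig := i.isLt
  have hjg := j.isLt
  by_cases hj : (j : ℕ) < 2 * x ∧ (j : ℕ) % 2 = 0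
  · obtain ⟨hja, hjb⟩ := hj
    have hjc : (j : ℕ) + 1 < 2 * x := by omega
    have hjd : ((j : ℕ) + 1) % 2 = 1 := by omega
    have hj1 : (j : ℕ) + 1 < g := by omega
    rw [sum_two' (fun k => Pmat g x y z i k * Wmat g x z k j) j ⟨(j : ℕ) + 1, hj1⟩
      (by simp [Fin.ext_iff])
      (by
        intro k hk1 hk2
        have hk1' := Fin.val_ne_of_ne hk1
        have hk2' := Fin.val_ne_of_ne hk2
        simp only [Fin.val_mk] at hk2'
        have hz : Wmat g x z k j = 0 := by
          simp only [Wmat, of_apply]; split_ifs <;> omega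
        simp only [hz, mul_zero])]
    by_cases h1 : (i : ℕ) < 2 * x
    · by_cases h2 : (i : ℕ) % 2 = 0
      · rw [sum_one' (fun k => -Wmat g x y i k * Pmat g x y z k j) i
          (by
            intro k hk1
            have hk1' := Fin.val_ne_of_ne hk1
            have hz : Wmat g x y i k = 0 := by
              simp only [Wmat, of_apply]; split_ifs <;> omega
            simp only [hz, neg_zero, zero_mul])]
        simp [Pmat, Wmat, Fin.ext_iff, h1, h2, hja, hjb, hjc, hjd]
        all_goals first | (split_ifs <;> first | omega | norm_num) | omega | norm_num
      · have h2' : (i : ℕ) % 2 = 1 := by omega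
        have hia : (i : ℕ) - 1 < 2 * x := by omega
        have hib : ((i : ℕ) - 1) % 2 = 0 := by omega
        have hi0 : (i : ℕ) - 1 < g := by omega
        rw [sum_two' (fun k => -Wmat g x y i k * Pmat g x y z k j) ⟨(i : ℕ) - 1, hi0⟩ i
          (by simp [Fin.ext_iff]; omega)
          (by
            intro k hk1 hk2
            have hk1' := Fin.val_ne_of_ne hk1
            have hk2' := Fin.val_ne_of_ne hk2
            simp only [Fin.val_mk] at hk1'
            have hz : Wmat g x y i k = 0 := by
              simp only [Wmat, of_apply]; split_ifs <;> omega
            simp only [hz, neg_zero, zero_mul])]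
        simp [Pmat, Wmat, Fin.ext_iff, h1, h2', hia, hib, hja, hjb, hjc, hjd]
        all_goals first | (split_ifs <;> first | omega | norm_num) | omega | norm_num
    · rw [sum_one' (fun k => -Wmat g x y i k * Pmat g x y z k j) i
        (by
          intro k hk1
          have hk1' := Fin.val_ne_of_ne hk1
          have hz : Wmat g x y i k = 0 := by
            simp only [Wmat, of_apply]; split_ifs <;> omega
          simp only [hz, neg_zero, zero_mul])]
      simp [Pmat, Wmat, Fin.ext_iff, h1, hja, hjb, hjc, hjd]
      all_goals first | (split_ifs <;> first | omega | norm_num) | omega | norm_num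
  · rw [sum_one' (fun k => Pmat g x y z i k * Wmat g x z k j) j
      (by
        intro k hk1
        have hk1' := Fin.val_ne_of_ne hk1
        have hz : Wmat g x z k j = 0 := by
          simp only [Wmat, of_apply]; split_ifs <;> omega
        simp only [hz, mul_zero])]
    by_cases h1 : (i : ℕ) < 2 * x
    · by_cases h2 : (i : ℕ) % 2 = 0
      · rw [sum_one' (fun k => -Wmat g x y i k * Pmat g x y z k j) i
          (by
            intro k hk1
            have hk1' := Fin.val_ne_of_ne hk1
            have hz : Wmat g x y i k = 0 := by
              simp only [Wmat, of_apply]; split_ifs <;> omega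
            simp only [hz, neg_zero, zero_mul])]
        simp [Pmat, Wmat, Fin.ext_iff, h1, h2]
        all_goals first | (split_ifs <;> first | omega | norm_num) | omega | norm_num
      · have h2' : (i : ℕ) % 2 = 1 := by omega
        have hia : (i : ℕ) - 1 < 2 * x := by omega
        have hib : ((i : ℕ) - 1) % 2 = 0 := by omega
        have hi0 : (i : ℕ) - 1 < g := by omega
        rw [sum_two' (fun k => -Wmat g x y i k * Pmat g x y z k j) ⟨(i : ℕ) - 1, hi0⟩ i
          (by simp [Fin.ext_iff]; omega)
          (by
            intro k hk1 hk2
            have hk1' := Fin.val_ne_of_ne hk1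
            have hk2' := Fin.val_ne_of_ne hk2
            simp only [Fin.val_mk] at hk1'
            have hz : Wmat g x y i k = 0 := by
              simp only [Wmat, of_apply]; split_ifs <;> omega
            simp only [hz, neg_zero, zero_mul])]
        simp [Pmat, Wmat, Fin.ext_iff, h1, h2', hia, hib]
        all_goals first | (split_ifs <;> first | omega | norm_num) | omega | norm_num
    · rw [sum_one' (fun k => -Wmat g x y i k * Pmat g x y z k j) i
        (by
          intro k hk1
          have hk1' := Fin.val_ne_of_ne hk1
          have hz : Wmat g x y i k = 0 := by
            simp only [Wmat, of_apply]; split_ifs <;> omega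
          simp only [hz, neg_zero, zero_mul])]
      simp [Pmat, Wmat, Fin.ext_iff, h1]
      all_goals first | (split_ifs <;> first | omega | norm_num) | omega | norm_num

/-- For `2x + y + z = g`, the matrix `(-1) · (W(x,y,z) ⊕ ᵗW(x,y,z))` is conjugate
in `Sp(2g, ℤ)` to `W(x,z,y) ⊕ ᵗW(x,z,y)`. -/
theorem neg_R_conjugate (g x y z : ℕ) (h : 2 * x + y + z = g) :
    ∃ E : Matrix (Fin g ⊕ Fin g) (Fin g ⊕ Fin g) ℤ,
      Eᵀ * Jstd g * E = Jstd g ∧ IsUnit E ∧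
      E⁻¹ * (-(Matrix.fromBlocks (Wmat g x y) 0 0 (Wmat g x y)ᵀ)) * E =
        Matrix.fromBlocks (Wmat g x z) 0 0 (Wmat g x z)ᵀ := by
  set P := Pmat g x y z with hP
  set Q := Pinvmat g x y z with hQ
  have hPQ : P * Q = 1 := mulPPinv h
  have hQP : Q * P = 1 := mul_eq_one_comm.mp hPQ
  have hTT : Qᵀ * Pᵀ = 1 := by rw [← Matrix.transpose_mul, hPQ, Matrix.transpose_one]
  have hTT' : Pᵀ * Qᵀ = 1 := by rw [← Matrix.transpose_mul, hQP, Matrix.transpose_one]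
  have hEinv : (Matrix.fromBlocks P 0 0 Qᵀ) * (Matrix.fromBlocks Q 0 0 Pᵀ) = 1 := by
    rw [Matrix.fromBlocks_multiply]
    simp only [Matrix.mul_zero, Matrix.zero_mul, add_zero, zero_add, hPQ, hTT]
    exact Matrix.fromBlocks_one
  refine ⟨Matrix.fromBlocks P 0 0 Qᵀ, ?_, IsUnit.of_mul_eq_one _ hEinv, ?_⟩
  · rw [Jstd, Matrix.fromBlocks_transpose, Matrix.fromBlocks_multiply,
      Matrix.fromBlocks_multiply]
    simp only [Matrix.transpose_zero, Matrix.transpose_transpose, Matrix.mul_zero,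
      Matrix.zero_mul, Matrix.mul_one, Matrix.one_mul, add_zero, zero_add,
      Matrix.mul_neg, Matrix.neg_mul, Matrix.mul_one, hTT']
    rw [hQP]
    norm_num
  · have hc : Q * (-(Wmat g x y)) * P = Wmat g x z := by
      rw [Matrix.mul_assoc, keyPW h, ← Matrix.mul_assoc, hQP, Matrix.one_mul]
    have hcT : Pᵀ * (-(Wmat g x y))ᵀ * Qᵀ = (Wmat g x z)ᵀ := by
      have h2 := congrArg Matrix.transpose hc
      rw [Matrix.transpose_mul, Matrix.transpose_mul] at h2
      rw [← Matrix.mul_assoc] at h2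
      exact h2
    rw [Matrix.inv_eq_right_inv hEinv]
    have hneg : -(Matrix.fromBlocks (Wmat g x y) 0 0 (Wmat g x y)ᵀ) =
        Matrix.fromBlocks (-(Wmat g x y)) 0 0 (-(Wmat g x y))ᵀ := by
      rw [Matrix.fromBlocks_neg, Matrix.transpose_neg]
      norm_num
    rw [hneg, Matrix.fromBlocks_multiply, Matrix.fromBlocks_multiply]
    simp only [Matrix.mul_zero, Matrix.zero_mul, add_zero, zero_add]
    rw [hc, hcT]
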